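/- Let 1 ≤ ℓ ≤ k and let π₁, …, π_ℓ be up-right paths with values in {1,…,N}×{1,…,k} with pairwise disjoint supports, starting abscissas all equal to 1 and ending abscissas all equal to N. Then the collection can be re-indexed so that π₁ < π₂ < ⋯ < π_ℓ, where π < π' means that for every n ∈ {1,…,N}, every point of the support of π with first coordinate n lies strictly below (has strictly smaller second coordinate than) every point of the support of π' with first coordinate n. -/

import Mathlib

/-- `IsUpRightPath N k p π` : `π` is an up-right path on `{1,…,p}` with values in
`{1,…,N} × {1,…,k}`: at each step, exactly one coordinate increases by `1`. -/
def IsUpRightPath (N k p : ℕ) (π : ℕ → ℕ × ℕ) : Prop :=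
  (∀ i, 1 ≤ i → i ≤ p → (1 ≤ (π i).1 ∧ (π i).1 ≤ N) ∧ (1 ≤ (π i).2 ∧ (π i).2 ≤ k)) ∧
  (∀ i, 2 ≤ i → i ≤ p →
    ((π i).1 = (π (i - 1)).1 + 1 ∧ (π i).2 = (π (i - 1)).2) ∨
    ((π i).1 = (π (i - 1)).1 ∧ (π i).2 = (π (i - 1)).2 + 1))

/-- The support of a path `π` defined on `{1,…,p}`: its image. -/
def pathSupport (p : ℕ) (π : ℕ → ℕ × ℕ) : Set (ℕ × ℕ) := π '' (Set.Icc 1 p)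

/-- `π < π'` for paths: for every abscissa `n`, every point of the support of `π`
in column `n` lies strictly below every point of the support of `π'` in column `n`. -/
def PathLt (p : ℕ) (π : ℕ → ℕ × ℕ) (p' : ℕ) (π' : ℕ → ℕ × ℕ) : Prop :=
  ∀ P ∈ pathSupport p π, ∀ Q ∈ pathSupport p' π', P.1 = Q.1 → P.2 < Q.2

lemma envelope (N k p : ℕ) (π : ℕ → ℕ × ℕ) (hp : 1 ≤ p)
    (H : IsUpRightPath N k p π) (hs : (π 1).1 = 1) (he : (π p).1 = N) :
    ∃ a b : ℕ → ℕ,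
      (∀ n, 1 ≤ n → n ≤ N → a n ≤ b n ∧
        ∀ y, a n ≤ y → y ≤ b n → (n, y) ∈ pathSupport p π) ∧
      (∀ P ∈ pathSupport p π, a P.1 ≤ P.2 ∧ P.2 ≤ b P.1) ∧
      (∀ n, 1 ≤ n → n + 1 ≤ N → a (n + 1) = b n) := by
  classical
  obtain ⟨Hr, Hstep⟩ := H
  have step : ∀ i, 1 ≤ i → i + 1 ≤ p →
      ((π (i+1)).1 = (π i).1 + 1 ∧ (π (i+1)).2 = (π i).2) ∨
      ((π (i+1)).1 = (π i).1 ∧ (π (i+1)).2 = (π i).2 + 1) := by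
    intro i hi hip
    have h := Hstep (i+1) (by omega) hip
    simpa using h
  have mono : ∀ i, 1 ≤ i → ∀ j, i ≤ j → j ≤ p → (π i).1 ≤ (π j).1 ∧ (π i).2 ≤ (π j).2 := by
    intro i hi j hij
    induction j, hij using Nat.le_induction with
    | base => intro _; exact ⟨le_rfl, le_rfl⟩
    | succ j hij ih =>
      intro hj
      have h2 := ih (by omega)
      rcases step j (by omega) hj with ⟨h1', h2'⟩ | ⟨h1', h2'⟩ <;>
        exact ⟨by omega, by omega⟩
  have cover : ∀ n, 1 ≤ n → n ≤ N → ∃ i, 1 ≤ i ∧ i ≤ p ∧ (π i).1 = n := by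
    intro n hn hnN
    by_contra hc
    push_neg at hc
    set G := Nat.findGreatest (fun i => 1 ≤ i ∧ (π i).1 ≤ n) p with hGdef
    have hP1 : 1 ≤ 1 ∧ (π 1).1 ≤ n := ⟨le_rfl, by omega⟩
    have hGspec : 1 ≤ G ∧ (π G).1 ≤ n := Nat.findGreatest_spec (P := fun i => 1 ≤ i ∧ (π i).1 ≤ n) hp hP1
    have hGle : G ≤ p := Nat.findGreatest_le p
    have hG1 : 1 ≤ G := Nat.le_findGreatest (P := fun i => 1 ≤ i ∧ (π i).1 ≤ n) hp hP1
    have hGlt : (π G).1 < n := lt_of_le_of_ne hGspec.2 (hc G hG1 hGle)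
    have hGp : G < p := by
      rcases lt_or_eq_of_le hGle with h | h
      · exact h
      · rw [h] at hGlt; omega
    have hnx : (π (G+1)).1 ≤ n := by
      rcases step G hG1 (by omega) with ⟨h1, _⟩ | ⟨h1, _⟩ <;> omega
    exact Nat.findGreatest_is_greatest (P := fun i => 1 ≤ i ∧ (π i).1 ≤ n)
      (n := p) (k := G + 1) (by omega) (by omega) ⟨by omega, hnx⟩
  set L : ℕ → ℕ := fun n => sInf {i | 1 ≤ i ∧ (π i).1 = n} with hLdef
  set G : ℕ → ℕ := fun n => Nat.findGreatest (fun i => 1 ≤ i ∧ (π i).1 = n) p with hGdef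
  have hLmem : ∀ n, 1 ≤ n → n ≤ N → 1 ≤ L n ∧ (π (L n)).1 = n := by
    intro n hn hnN
    obtain ⟨i, hi1, hip, hiv⟩ := cover n hn hnN
    exact Nat.sInf_mem (s := {i | 1 ≤ i ∧ (π i).1 = n}) ⟨i, hi1, hiv⟩
  have hLle : ∀ n i, 1 ≤ i → (π i).1 = n → L n ≤ i := by
    intro n i h1 h2
    exact Nat.sInf_le ⟨h1, h2⟩
  have hGmem : ∀ n, 1 ≤ n → n ≤ N → (1 ≤ G n ∧ (π (G n)).1 = n) ∧ G n ≤ p := by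
    intro n hn hnN
    obtain ⟨i, hi1, hip, hiv⟩ := cover n hn hnN
    exact ⟨Nat.findGreatest_spec (P := fun i => 1 ≤ i ∧ (π i).1 = n) hip ⟨hi1, hiv⟩, Nat.findGreatest_le p⟩
  have hGge : ∀ n i, 1 ≤ i → i ≤ p → (π i).1 = n → i ≤ G n := by
    intro n i h1 h2 h3
    exact Nat.le_findGreatest (P := fun i => 1 ≤ i ∧ (π i).1 = n) h2 ⟨h1, h3⟩
  have hLG : ∀ n, 1 ≤ n → n ≤ N → L n ≤ G n := by
    intro n hn hnN
    exact hLle n (G n) ((hGmem n hn hnN).1).1 ((hGmem n hn hnN).1).2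
  have fill : ∀ n, 1 ≤ n → n ≤ N → ∀ t, L n + t ≤ G n →
      (π (L n + t)).1 = n ∧ (π (L n + t)).2 = (π (L n)).2 + t := by
    intro n hn hnN t
    induction t with
    | zero => intro _; exact ⟨(hLmem n hn hnN).2, rfl⟩
    | succ t ih =>
      intro ht
      have h1 := ih (by omega)
      have hi1 : 1 ≤ L n + t := by have := (hLmem n hn hnN).1; omega
      have hip : L n + t + 1 ≤ p := by have := (hGmem n hn hnN).2; omega
      have heq : L n + (t + 1) = (L n + t) + 1 := by omega
      rw [heq]
      rcases step (L n + t) hi1 hip with ⟨hx, hy⟩ | ⟨hx, hy⟩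
      · exfalso
        have hm := (mono (L n + t + 1) (by omega) (G n) (by omega) (hGmem n hn hnN).2).1
        have := ((hGmem n hn hnN).1).2
        omega
      · exact ⟨by omega, by omega⟩
  have chain : ∀ n, 1 ≤ n → n + 1 ≤ N →
      L (n+1) = G n + 1 ∧ (π (G n + 1)).2 = (π (G n)).2 := by
    intro n hn hnN
    have hg := hGmem n hn (by omega)
    have hGp : G n < p := by
      rcases lt_or_eq_of_le hg.2 with h | h
      · exact h
      · exfalso; have := hg.1.2; rw [h, he] at this; omega
    rcases step (G n) hg.1.1 (by omega) with ⟨hx, hy⟩ | ⟨hx, hy⟩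
    · have hx' : (π (G n + 1)).1 = n + 1 := by have := hg.1.2; omega
      have hle : L (n+1) ≤ G n + 1 := hLle (n+1) _ (by omega) hx'
      have hgt : G n < L (n+1) := by
        by_contra hcon
        push_neg at hcon
        have hlm := hLmem (n+1) (by omega) hnN
        have hm := (mono (L (n+1)) hlm.1 (G n) hcon hg.2).1
        have := hg.1.2
        omega
      exact ⟨by omega, hy⟩
    · exfalso
      have hx' : (π (G n + 1)).1 = n := by have := hg.1.2; omega
      have hmax : ¬ (1 ≤ G n + 1 ∧ (π (G n + 1)).1 = n) :=
        Nat.findGreatest_is_greatest (P := fun i => 1 ≤ i ∧ (π i).1 = n)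
          (Nat.lt_succ_self _) (by omega)
      exact hmax ⟨by omega, hx'⟩
  refine ⟨fun n => (π (L n)).2, fun n => (π (G n)).2, ?_, ?_, ?_⟩
  · intro n hn hnN
    show (π (L n)).2 ≤ (π (G n)).2 ∧
      ∀ y, (π (L n)).2 ≤ y → y ≤ (π (G n)).2 → (n, y) ∈ pathSupport p π
    have hfillG := fill n hn hnN (G n - L n) (by have := hLG n hn hnN; omega)
    have hGLeq : L n + (G n - L n) = G n := by have := hLG n hn hnN; omega
    rw [hGLeq] at hfillG
    refine ⟨by omega, ?_⟩
    intro y hy1 hy2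
    have ht : L n + (y - (π (L n)).2) ≤ G n := by omega
    have hf := fill n hn hnN (y - (π (L n)).2) ht
    refine ⟨L n + (y - (π (L n)).2), ⟨?_, ?_⟩, ?_⟩
    · have := (hLmem n hn hnN).1; omega
    · have := (hGmem n hn hnN).2; omega
    · have h1 := hf.1
      have h2 : (π (L n + (y - (π (L n)).2))).2 = y := by omega
      exact Prod.ext h1 h2
  · rintro P ⟨i, ⟨hi1, hip⟩, rfl⟩
    show (π (L (π i).1)).2 ≤ (π i).2 ∧ (π i).2 ≤ (π (G (π i).1)).2
    have hr := Hr i hi1 hip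
    have hn1 : 1 ≤ (π i).1 := hr.1.1
    have hnN : (π i).1 ≤ N := hr.1.2
    constructor
    · exact (mono (L (π i).1) (hLmem _ hn1 hnN).1 i (hLle _ i hi1 rfl) hip).2
    · exact (mono i hi1 (G (π i).1) (hGge _ i hi1 hip rfl) (hGmem _ hn1 hnN).2).2
  · intro n hn hnN
    show (π (L (n+1))).2 = (π (G n)).2
    have hc := chain n hn hnN
    rw [hc.1]
    exact hc.2
lemma propagate (N : ℕ) (a b a' b' : ℕ → ℕ)
    (hab' : ∀ n, 1 ≤ n → n ≤ N → a' n ≤ b' n)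
    (hchain : ∀ n, 1 ≤ n → n + 1 ≤ N → a (n+1) = b n)
    (hchain' : ∀ n, 1 ≤ n → n + 1 ≤ N → a' (n+1) = b' n)
    (hcol : ∀ n, 1 ≤ n → n ≤ N → b n < a' n ∨ b' n < a n)
    (h1 : b 1 < a' 1) :
    ∀ n, 1 ≤ n → n ≤ N → b n < a' n := by
  intro n
  induction n with
  | zero => omega
  | succ n ih =>
    intro _ hN
    rcases Nat.lt_or_ge n 1 with h | h
    · have hn0 : n = 0 := by omega
      subst hn0
      exact h1
    · have hbn := ih h (by omega)
      rcases hcol (n+1) (by omega) hN with h' | h'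
      · exact h'
      · exfalso
        have e1 := hchain n h (by omega)
        have e2 := hchain' n h (by omega)
        have e3 := hab' (n+1) (by omega) hN
        have e4 := hab' n h (by omega)
        omega

lemma supp_col (N k p : ℕ) (π : ℕ → ℕ × ℕ) (H : IsUpRightPath N k p π) :
    ∀ P ∈ pathSupport p π, 1 ≤ P.1 ∧ P.1 ≤ N := by
  rintro P ⟨i, ⟨h1, h2⟩, rfl⟩
  exact (H.1 i h1 h2).1

lemma pathLt_or (N k p p' : ℕ) (π π' : ℕ → ℕ × ℕ) (hN : 1 ≤ N)
    (hp : 1 ≤ p) (hp' : 1 ≤ p')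
    (H : IsUpRightPath N k p π) (H' : IsUpRightPath N k p' π')
    (hs : (π 1).1 = 1) (hs' : (π' 1).1 = 1)
    (he : (π p).1 = N) (he' : (π' p').1 = N)
    (hdisj : Disjoint (pathSupport p π) (pathSupport p' π')) :
    PathLt p π p' π' ∨ PathLt p' π' p π := by
  obtain ⟨a, b, hab, hbound, hchain⟩ := envelope N k p π hp H hs he
  obtain ⟨a', b', hab', hbound', hchain'⟩ := envelope N k p' π' hp' H' hs' he'
  have hcol : ∀ n, 1 ≤ n → n ≤ N → b n < a' n ∨ b' n < a n := by
    intro n hn hnN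
    by_contra hc
    push_neg at hc
    have h1 : (n, max (a n) (a' n)) ∈ pathSupport p π :=
      (hab n hn hnN).2 _ (le_max_left _ _) (max_le (hab n hn hnN).1 hc.1)
    have h2 : (n, max (a n) (a' n)) ∈ pathSupport p' π' :=
      (hab' n hn hnN).2 _ (le_max_right _ _) (max_le hc.2 (hab' n hn hnN).1)
    exact Set.disjoint_left.mp hdisj h1 h2
  have habl : ∀ n, 1 ≤ n → n ≤ N → a n ≤ b n := fun n h1 h2 => (hab n h1 h2).1
  have habl' : ∀ n, 1 ≤ n → n ≤ N → a' n ≤ b' n := fun n h1 h2 => (hab' n h1 h2).1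
  rcases hcol 1 le_rfl hN with h | h
  · left
    have hall := propagate N a b a' b' habl' hchain hchain' hcol h
    intro P hP Q hQ hPQ
    have hrP := supp_col N k p π H P hP
    have hbP := hbound P hP
    have haQ := hbound' Q hQ
    have := hall P.1 hrP.1 hrP.2
    rw [hPQ] at this hbP
    omega
  · right
    have hcol' : ∀ n, 1 ≤ n → n ≤ N → b' n < a n ∨ b n < a' n := by
      intro n h1 h2
      exact (hcol n h1 h2).symm
    have hall := propagate N a' b' a b habl hchain' hchain hcol' h
    intro Q hQ P hP hQP
    have hrQ := supp_col N k p' π' H' Q hQ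
    have hbQ := hbound' Q hQ
    have haP := hbound P hP
    have := hall Q.1 hrQ.1 hrQ.2
    rw [hQP] at this hbQ
    omega

lemma exists_sorting_perm {n : ℕ} (r : Fin n → Fin n → Prop)
    (irr : ∀ i, ¬ r i i)
    (tr : ∀ i j l, r i j → r j l → r i l)
    (tot : ∀ i j, i ≠ j → r i j ∨ r j i) :
    ∃ σ : Equiv.Perm (Fin n), ∀ i j, i < j → r (σ i) (σ j) := by
  classical
  have hSTO : IsStrictTotalOrder (Fin n) r :=
    { irrefl := irr
      trans := tr
      trichotomous := fun i j => by
        rcases eq_or_ne i j with h | h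
        · exact fun _ _ => h
        · rcases tot i j h with h' | h'
          · exact fun h1 _ => absurd h' h1
          · exact fun _ h2 => absurd h' h2 }
  let L : LinearOrder (Fin n) := @linearOrderOfSTO _ r hSTO (Classical.decRel r)
  let e : @OrderIso (Fin n) (Fin n) instLEFin
      (@Preorder.toLE _ (@PartialOrder.toPreorder _ (@LinearOrder.toPartialOrder _ L))) :=
    @monoEquivOfFin (Fin n) _ L n (by simp)
  have hm := @OrderIso.strictMono (Fin n) (Fin n) _
      (@PartialOrder.toPreorder _ (@LinearOrder.toPartialOrder _ L)) e
  exact ⟨e.toEquiv, fun i j hij => hm hij⟩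
/-- A family of `ℓ ≤ k` up-right paths in `{1,…,N} × {1,…,k}` with pairwise
disjoint supports, starting abscissas all `1` and ending abscissas all `N`, can
be re-indexed so that `π₁ < π₂ < ⋯ < π_ℓ`. -/
theorem upRightPaths_reindex_ordered
    (N k ℓ : ℕ) (hN : 1 ≤ N) (hℓ : 1 ≤ ℓ) (hℓk : ℓ ≤ k)
    (pl : Fin ℓ → ℕ) (π : Fin ℓ → ℕ → ℕ × ℕ)
    (hpl : ∀ r, 1 ≤ pl r)
    (hπ : ∀ r, IsUpRightPath N k (pl r) (π r))
    (hstart : ∀ r, (π r 1).1 = 1)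
    (hend : ∀ r, (π r (pl r)).1 = N)
    (hdisj : ∀ r s, r ≠ s → Disjoint (pathSupport (pl r) (π r)) (pathSupport (pl s) (π s))) :
    ∃ σ : Equiv.Perm (Fin ℓ),
      ∀ r s : Fin ℓ, r < s → PathLt (pl (σ r)) (π (σ r)) (pl (σ s)) (π (σ s)) := by
  classical
  have hmem1 : ∀ r : Fin ℓ, π r 1 ∈ pathSupport (pl r) (π r) :=
    fun r => ⟨1, ⟨le_rfl, hpl r⟩, rfl⟩
  have irr : ∀ r, ¬ PathLt (pl r) (π r) (pl r) (π r) := by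
    intro r h
    exact lt_irrefl _ (h _ (hmem1 r) _ (hmem1 r) rfl)
  have tr : ∀ r s t, PathLt (pl r) (π r) (pl s) (π s) →
      PathLt (pl s) (π s) (pl t) (π t) → PathLt (pl r) (π r) (pl t) (π t) := by
    intro r s t h1 h2 P hP Q hQ hPQ
    obtain ⟨a, b, hab, hbound, hchain⟩ :=
      envelope N k (pl s) (π s) (hpl s) (hπ s) (hstart s) (hend s)
    have hrP := supp_col N k (pl r) (π r) (hπ r) P hP
    have hmid : (P.1, a P.1) ∈ pathSupport (pl s) (π s) :=
      (hab P.1 hrP.1 hrP.2).2 _ le_rfl (hab P.1 hrP.1 hrP.2).1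
    have l1 := h1 P hP _ hmid rfl
    have l2 := h2 _ hmid Q hQ hPQ
    exact lt_trans l1 l2
  have tot : ∀ r s, r ≠ s →
      PathLt (pl r) (π r) (pl s) (π s) ∨ PathLt (pl s) (π s) (pl r) (π r) :=
    fun r s hrs =>
      pathLt_or N k (pl r) (pl s) (π r) (π s) hN (hpl r) (hpl s) (hπ r) (hπ s)
        (hstart r) (hstart s) (hend r) (hend s) (hdisj r s hrs)
  obtain ⟨σ, hσ⟩ := exists_sorting_perm
    (fun r s => PathLt (pl r) (π r) (pl s) (π s)) irr tr tot
  exact ⟨σ, hσ⟩
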